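/- arXiv:0802.0447 — 8 statements merged into one kernel-verified Lean document; each statement's English description precedes it below -/
import Mathlib

section
/- Let u be a d×d complex unitary matrix and suppose V is a nonzero D×D complex matrix and λ ∈ ℂ satisfy E_u(V) = λ·V. Then |λ| ≤ 1. (In particular, every eigenvalue of the linear map E_u on D×D matrices has modulus at most 1, so its spectral radius is at most 1.) -/
open Matrix Complex
open scoped ComplexOrder

/-- The map `E_O(X) = ∑_{n,n'} O_{n',n} · A_n X (A_{n'})ᴴ`. -/
noncomputable def EO {d D : ℕ} (A : Fin d → Matrix (Fin D) (Fin D) ℂ)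
    (O : Matrix (Fin d) (Fin d) ℂ) (X : Matrix (Fin D) (Fin D) ℂ) :
    Matrix (Fin D) (Fin D) ℂ :=
  ∑ n : Fin d, ∑ n' : Fin d, O n' n • (A n * X * (A n')ᴴ)

private lemma trace_conjT_mul {D : ℕ} (M N : Matrix (Fin D) (Fin D) ℂ) :
    (Mᴴ * N).trace = ∑ i : Fin D, ∑ j : Fin D, (starRingEnd ℂ) (M i j) * N i j := by
  simp only [Matrix.trace, Matrix.diag, Matrix.mul_apply, Matrix.conjTranspose_apply]
  exact Finset.sum_comm

/-- Every eigenvalue of `E_u` has modulus at most 1. -/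
theorem spectral_radius_le_one (d D : ℕ) (hd : 1 ≤ d) (hD : 1 ≤ D)
    (A : Fin d → Matrix (Fin D) (Fin D) ℂ)
    (hA : ∑ n : Fin d, A n * (A n)ᴴ = 1)
    (Λ : Matrix (Fin D) (Fin D) ℂ) (hΛ : Λ.PosDef) (hΛtr : Λ.trace = 1)
    (hΛfix : ∑ n : Fin d, (A n)ᴴ * Λ * A n = Λ)
    (u : Matrix (Fin d) (Fin d) ℂ) (hu : u ∈ Matrix.unitaryGroup (Fin d) ℂ)
    (V : Matrix (Fin D) (Fin D) ℂ) (hV : V ≠ 0) (lam : ℂ)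
    (heig : EO A u V = lam • V) :
    ‖lam‖ ≤ 1 := by
  classical
  obtain ⟨S, hSsa, -, hS2⟩ := open scoped MatrixOrder in CFC.exists_sqrt_of_isSelfAdjoint_of_quasispectrumRestricts
    (a := Λ) hΛ.posSemidef.isHermitian (QuasispectrumRestricts.nnreal_of_nonneg hΛ.posSemidef.nonneg)
  have hSH : Sᴴ = S := hSsa
  set B : Fin d → Matrix (Fin D) (Fin D) ℂ := fun m => ∑ n, u m n • A n with hBdef
  set t : ℂ := (Vᴴ * Λ * V).trace with htdef
  -- general reduction: tr((S*X)ᴴ (S*Y)) = tr(Xᴴ Λ Y)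
  have step2 : ∀ X Y : Matrix (Fin D) (Fin D) ℂ,
      ((S * X)ᴴ * (S * Y)).trace = (Xᴴ * Λ * Y).trace := by
    intro X Y
    have : (S * X)ᴴ * (S * Y) = Xᴴ * Λ * Y := by
      rw [Matrix.conjTranspose_mul, hSH, ← hS2]
      simp only [Matrix.mul_assoc]
    rw [this]
  -- E_u(V) = ∑ m, B m * V * (A m)ᴴ
  have hEB : ∑ m, B m * V * (A m)ᴴ = EO A u V := by
    rw [EO, Finset.sum_comm]
    refine Finset.sum_congr rfl fun m _ => ?_
    simp [hBdef, Finset.sum_mul, smul_mul_assoc]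
  -- ∑ m, (B m)ᴴ * Λ * B m = Λ
  have hu1 : star u * u = 1 := Matrix.mem_unitaryGroup_iff'.mp hu
  have hB : ∑ m, (B m)ᴴ * Λ * B m = Λ := by
    have expand : ∀ m, (B m)ᴴ * Λ * B m
        = ∑ n, ∑ n', (star (u m n) * u m n') • ((A n)ᴴ * Λ * A n') := by
      intro m
      simp only [hBdef, Matrix.conjTranspose_sum, Matrix.conjTranspose_smul, Finset.sum_mul,
        Finset.mul_sum, smul_mul_assoc, Matrix.mul_smul, smul_smul, Finset.smul_sum]
      rw [Finset.sum_comm]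
    calc ∑ m, (B m)ᴴ * Λ * B m
        = ∑ n, ∑ n', (∑ m, star (u m n) * u m n') • ((A n)ᴴ * Λ * A n') := by
          simp_rw [expand, Finset.sum_smul]
          rw [Finset.sum_comm]
          exact Finset.sum_congr rfl fun n _ => Finset.sum_comm
      _ = ∑ n, ∑ n', ((1 : Matrix (Fin d) (Fin d) ℂ) n n') • ((A n)ᴴ * Λ * A n') := by
          refine Finset.sum_congr rfl fun n _ => Finset.sum_congr rfl fun n' _ => ?_
          rw [← hu1]
          simp [Matrix.mul_apply, Matrix.star_apply]
      _ = ∑ n, (A n)ᴴ * Λ * A n := by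
          refine Finset.sum_congr rfl fun n _ => ?_
          simp [Matrix.one_apply, ite_smul]
      _ = Λ := hΛfix
  -- the two vector families
  set p : EuclideanSpace ℂ (Fin d × Fin D × Fin D) :=
    WithLp.toLp 2 (fun x : Fin d × Fin D × Fin D => (S * (V * A x.1)) x.2.1 x.2.2) with hpdef
  set q : EuclideanSpace ℂ (Fin d × Fin D × Fin D) :=
    WithLp.toLp 2 (fun x : Fin d × Fin D × Fin D => (S * (B x.1 * V)) x.2.1 x.2.2) with hqdef
  have inner_eq : ∀ (P Q : Fin d → Matrix (Fin D) (Fin D) ℂ)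
      (x y : EuclideanSpace ℂ (Fin d × Fin D × Fin D)),
      (∀ v, x v = (P v.1) v.2.1 v.2.2) → (∀ v, y v = (Q v.1) v.2.1 v.2.2) →
      (inner ℂ x y : ℂ) = ∑ n, ((P n)ᴴ * Q n).trace := by
    intro P Q x y hx hy
    rw [PiLp.inner_apply, Fintype.sum_prod_type]
    refine Finset.sum_congr rfl fun n _ => ?_
    rw [trace_conjT_mul, Fintype.sum_prod_type]
    simp [RCLike.inner_apply, hx, hy, mul_comm]
  have hip : (inner ℂ p q : ℂ) = lam * t := by
    rw [inner_eq (fun n => S * (V * A n)) (fun n => S * (B n * V)) p q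
      (fun v => rfl) (fun v => rfl)]
    have step : ∀ n : Fin d, ((S * (V * A n))ᴴ * (S * (B n * V))).trace
        = (Vᴴ * Λ * (B n * V * (A n)ᴴ)).trace := by
      intro n
      rw [step2, Matrix.conjTranspose_mul,
        show (A n)ᴴ * Vᴴ * Λ * (B n * V) = (A n)ᴴ * (Vᴴ * Λ * (B n * V)) by
          simp only [Matrix.mul_assoc],
        Matrix.trace_mul_comm]
      simp only [Matrix.mul_assoc]
    simp_rw [step]
    rw [← Matrix.trace_sum, ← Finset.mul_sum, hEB, heig, Matrix.mul_smul,
      Matrix.trace_smul, smul_eq_mul]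
  have hpp : (inner ℂ p p : ℂ) = t := by
    rw [inner_eq (fun n => S * (V * A n)) (fun n => S * (V * A n)) p p
      (fun v => rfl) (fun v => rfl)]
    have step : ∀ n : Fin d, ((S * (V * A n))ᴴ * (S * (V * A n))).trace
        = (Vᴴ * Λ * (V * (A n * (A n)ᴴ))).trace := by
      intro n
      rw [step2, Matrix.conjTranspose_mul,
        show (A n)ᴴ * Vᴴ * Λ * (V * A n) = (A n)ᴴ * (Vᴴ * Λ * (V * A n)) by
          simp only [Matrix.mul_assoc],
        Matrix.trace_mul_comm]
      simp only [Matrix.mul_assoc]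
    simp_rw [step]
    rw [← Matrix.trace_sum, ← Finset.mul_sum, ← Finset.mul_sum, hA, mul_one]
  have hqq : (inner ℂ q q : ℂ) = t := by
    rw [inner_eq (fun n => S * (B n * V)) (fun n => S * (B n * V)) q q
      (fun v => rfl) (fun v => rfl)]
    have step : ∀ n : Fin d, ((S * (B n * V))ᴴ * (S * (B n * V))).trace
        = ((B n)ᴴ * Λ * B n * (V * Vᴴ)).trace := by
      intro n
      rw [step2, Matrix.conjTranspose_mul,
        show Vᴴ * (B n)ᴴ * Λ * (B n * V) = Vᴴ * ((B n)ᴴ * Λ * (B n * V)) by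
          simp only [Matrix.mul_assoc],
        Matrix.trace_mul_comm]
      simp only [Matrix.mul_assoc]
    simp_rw [step]
    rw [← Matrix.trace_sum, ← Finset.sum_mul, hB, htdef,
      Matrix.trace_mul_comm (Vᴴ * Λ) V, Matrix.trace_mul_comm Λ (V * Vᴴ)]
    simp only [Matrix.mul_assoc]
  -- t is a positive real: t = ‖p‖², and p ≠ 0
  have hppnorm : ((‖p‖ : ℂ)) ^ 2 = t := by
    rw [← hpp]; exact (inner_self_eq_norm_sq_to_K p).symm
  have hqqnorm : ((‖q‖ : ℂ)) ^ 2 = t := by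
    rw [← hqq]; exact (inner_self_eq_norm_sq_to_K q).symm
  have hpq : ‖p‖ = ‖q‖ := by
    have : (‖p‖ : ℂ) ^ 2 = (‖q‖ : ℂ) ^ 2 := by rw [hppnorm, hqqnorm]
    have h2 : ‖p‖ ^ 2 = ‖q‖ ^ 2 := by exact_mod_cast this
    nlinarith [norm_nonneg p, norm_nonneg q]
  have hpne : p ≠ 0 := by
    intro hp0
    -- then each S * (V * A n) = 0, hence S * V = 0, hence Λ * V = 0, hence V = 0
    have hzero : ∀ n, S * (V * A n) = 0 := by
      intro n
      ext i j
      have := congrArg (fun w => w (n, i, j)) hp0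
      simpa [hpdef] using this
    have hSV : S * V = 0 := by
      have : S * V * (∑ n, A n * (A n)ᴴ) = 0 := by
        rw [Finset.mul_sum]
        refine Finset.sum_eq_zero fun n _ => ?_
        rw [show S * V * (A n * (A n)ᴴ) = (S * (V * A n)) * (A n)ᴴ by
          simp only [Matrix.mul_assoc], hzero n, Matrix.zero_mul]
      rwa [hA, mul_one] at this
    have hLV : Λ * V = 0 := by
      rw [← hS2, Matrix.mul_assoc, hSV, Matrix.mul_zero]
    have : V = 0 := by
      have hinv : Λ⁻¹ * Λ = 1 := Matrix.nonsing_inv_mul Λ hΛ.det_pos.ne'.isUnit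
      calc V = (Λ⁻¹ * Λ) * V := by rw [hinv, Matrix.one_mul]
        _ = Λ⁻¹ * (Λ * V) := by rw [Matrix.mul_assoc]
        _ = 0 := by rw [hLV, Matrix.mul_zero]
    exact hV this
  have hpnorm_pos : 0 < ‖p‖ := norm_pos_iff.mpr hpne
  -- Cauchy–Schwarz
  have hcs := norm_inner_le_norm (𝕜 := ℂ) p q
  rw [hip, ← hpq] at hcs
  have ht : t = ((‖p‖ : ℂ)) ^ 2 := hppnorm.symm
  have habs : ‖lam * t‖ = ‖lam‖ * ‖p‖ ^ 2 := by
    rw [norm_mul, ht, norm_pow, Complex.norm_real,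
      Real.norm_of_nonneg (norm_nonneg p)]
  rw [habs] at hcs
  rw [← sq] at hcs
  have hfin : ‖lam‖ * ‖p‖ ^ 2 ≤ 1 * ‖p‖ ^ 2 := by
    rw [one_mul]; exact hcs
  exact le_of_mul_le_mul_right hfin (by positivity)
end

section
/- Let u be a d×d complex unitary matrix, and suppose V is a nonzero D×D complex matrix and λ ∈ ℂ with |λ| = 1 satisfy E_u(V) = λ·V. Assume moreover that the only D×D matrices X with E(X) = X are the scalar multiples of the identity. Then, after rescaling V by a positive constant, V is unitary, and for every n one has ∑_m u_{n,m}·A_m = λ·V * A_n * Vᴴ. -/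
open Matrix Complex
open scoped ComplexOrder

lemma psd_diag_nonneg {D : ℕ} {S : Matrix (Fin D) (Fin D) ℂ} (hS : S.PosSemidef) (i : Fin D) :
    0 ≤ S i i := by
  have := hS.dotProduct_mulVec_nonneg (Pi.single i 1)
  simpa [Matrix.mulVec_single, dotProduct, Pi.single_apply, Finset.sum_ite_eq] using this

lemma psd_trace_zero {D : ℕ} {S : Matrix (Fin D) (Fin D) ℂ} (hS : S.PosSemidef)
    (h : S.trace = 0) : S = 0 := by
  obtain ⟨B, rfl⟩ : ∃ B : Matrix (Fin D) (Fin D) ℂ, S = Bᴴ * B := by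
    open scoped MatrixOrder in
    obtain ⟨B, hB⟩ := CStarAlgebra.nonneg_iff_eq_star_mul_self.mp hS.nonneg
    exact ⟨B, hB⟩
  suffices hB : B = 0 by simp [hB]
  have h' : ∑ j, (star (fun i => B i j)) ⬝ᵥ (fun i => B i j) = 0 := by
    simpa [Matrix.trace, Matrix.diag, Matrix.mul_apply, Matrix.conjTranspose_apply,
      dotProduct] using h
  have hnn : ∀ j ∈ Finset.univ, (0:ℂ) ≤ (star (fun i => B i j)) ⬝ᵥ (fun i => B i j) :=
    fun j _ => Finset.sum_nonneg fun i _ => star_mul_self_nonneg _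
  have h0 := (Finset.sum_eq_zero_iff_of_nonneg hnn).mp h'
  ext i j
  have := dotProduct_star_self_eq_zero.mp (h0 j (Finset.mem_univ j))
  simpa using congrFun this i

lemma posdef_pair_trace_zero {D : ℕ} {Λ S : Matrix (Fin D) (Fin D) ℂ}
    (hΛ : Λ.PosDef) (hS : S.PosSemidef) (h : (Λ * S).trace = 0) : S = 0 := by
  obtain ⟨B, rfl⟩ : ∃ B : Matrix (Fin D) (Fin D) ℂ, S = Bᴴ * B := by
    open scoped MatrixOrder in
    obtain ⟨B, hB⟩ := CStarAlgebra.nonneg_iff_eq_star_mul_self.mp hS.nonneg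
    exact ⟨B, hB⟩
  suffices hB : B = 0 by simp [hB]
  have h1 : (B * Λ * Bᴴ).trace = 0 := by
    rw [Matrix.trace_mul_cycle, Matrix.trace_mul_comm]; exact h
  have h2 : (B * Λ * Bᴴ) = 0 := psd_trace_zero (hΛ.posSemidef.mul_mul_conjTranspose_same B) h1
  ext i j
  by_contra hne
  have hx : (fun k => star (B i k)) ≠ 0 := by
    intro h0
    exact hne (by simpa using congrArg star (congrFun h0 j))
  have hpos := hΛ.dotProduct_mulVec_pos hx
  have heq : star (fun k => star (B i k)) ⬝ᵥ Λ *ᵥ (fun k => star (B i k)) = (B * Λ * Bᴴ) i i := by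
    simp [Matrix.mul_apply, Matrix.mulVec, dotProduct, Matrix.conjTranspose_apply,
      Finset.mul_sum, Finset.sum_mul, mul_comm, mul_left_comm, mul_assoc]
    rw [Finset.sum_comm]
  rw [heq, h2] at hpos
  simp at hpos

/-- If `E_u(V) = λ V` with `|λ| = 1` and the channel `E` has only trivial fixed
points, then (after rescaling by a positive constant) `V` is unitary and
intertwines the `A`'s: `∑_m u_{n,m} A_m = λ V A_n Vᴴ`. -/
theorem modulus_one_eigenvector_is_unitary_intertwiner (d D : ℕ)
    (hd : 1 ≤ d) (hD : 1 ≤ D)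
    (A : Fin d → Matrix (Fin D) (Fin D) ℂ)
    (hA : ∑ n : Fin d, A n * (A n)ᴴ = 1)
    (Λ : Matrix (Fin D) (Fin D) ℂ) (hΛ : Λ.PosDef) (hΛtr : Λ.trace = 1)
    (hΛfix : ∑ n : Fin d, (A n)ᴴ * Λ * A n = Λ)
    (u : Matrix (Fin d) (Fin d) ℂ) (hu : u ∈ Matrix.unitaryGroup (Fin d) ℂ)
    (V : Matrix (Fin D) (Fin D) ℂ) (hV : V ≠ 0) (lam : ℂ)
    (hlam : ‖lam‖ = 1)
    (heig : EO A u V = lam • V)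
    (hfix : ∀ X : Matrix (Fin D) (Fin D) ℂ,
      (∑ n : Fin d, A n * X * (A n)ᴴ) = X → ∃ c : ℂ, X = c • (1 : Matrix (Fin D) (Fin D) ℂ)) :
    ∃ c : ℝ, 0 < c ∧ (c : ℂ) • V ∈ Matrix.unitaryGroup (Fin D) ℂ ∧
      ∀ n : Fin d, ∑ m : Fin d, u n m • A m
        = lam • (((c : ℂ) • V) * A n * ((c : ℂ) • V)ᴴ) := by
  classical
  set B : Fin d → Matrix (Fin D) (Fin D) ℂ := fun k => ∑ m, u k m • A m with hBdef
  -- |lam|^2 = 1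
  have hll : lam * star lam = 1 := by
    rw [Complex.star_def, Complex.mul_conj, ← Complex.sq_norm, hlam]
    norm_num
  have hll' : star lam * lam = 1 := by rw [mul_comm] at hll; exact hll
  -- unitarity of u, entrywise
  have hu1 : ∀ m m' : Fin d, ∑ k, star (u k m') * u k m = if m' = m then 1 else 0 := by
    intro m m'
    have h := Matrix.mem_unitaryGroup_iff'.mp hu
    have h2 := congrFun (congrFun h m') m
    simpa only [Matrix.mul_apply, Matrix.star_apply, Matrix.one_apply] using h2
  -- ∑ k, B k * Y * (B k)ᴴ = ∑ n, A n * Y * (A n)ᴴ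
  have hBsum : ∀ Y : Matrix (Fin D) (Fin D) ℂ,
      ∑ k, B k * Y * (B k)ᴴ = ∑ n, A n * Y * (A n)ᴴ := by
    intro Y
    have step : ∀ k, B k * Y * (B k)ᴴ
        = ∑ m', ∑ m, (star (u k m') * u k m) • (A m * Y * (A m')ᴴ) := by
      intro k
      simp only [hBdef, Matrix.conjTranspose_sum, Matrix.conjTranspose_smul,
        Finset.sum_mul, Finset.mul_sum, Finset.smul_sum, smul_mul_assoc, mul_smul_comm,
        smul_smul, Matrix.mul_assoc]
    calc ∑ k, B k * Y * (B k)ᴴ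
        = ∑ k, ∑ m', ∑ m, (star (u k m') * u k m) • (A m * Y * (A m')ᴴ) :=
          Finset.sum_congr rfl fun k _ => step k
      _ = ∑ m', ∑ m, ∑ k, (star (u k m') * u k m) • (A m * Y * (A m')ᴴ) := by
          rw [Finset.sum_comm]
          exact Finset.sum_congr rfl fun m' _ => Finset.sum_comm
      _ = ∑ m', ∑ m, (∑ k, star (u k m') * u k m) • (A m * Y * (A m')ᴴ) := by
          simp only [Finset.sum_smul]
      _ = ∑ m', ∑ m, (if m' = m then (1:ℂ) else 0) • (A m * Y * (A m')ᴴ) := by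
          simp only [hu1]
      _ = ∑ n, A n * Y * (A n)ᴴ := by
          simp [ite_smul, Matrix.mul_assoc]
  -- eigenvector equation in B-form
  have hEig : ∑ k, B k * V * (A k)ᴴ = lam • V := by
    rw [← heig]
    simp only [EO]
    rw [Finset.sum_comm]
    refine Finset.sum_congr rfl fun k _ => ?_
    simp [hBdef, Finset.sum_mul, smul_mul_assoc]
  -- adjoint form of the eigenvector equation
  have hEig' : ∑ k, A k * Vᴴ * (B k)ᴴ = star lam • Vᴴ := by
    have := congrArg Matrix.conjTranspose hEig
    simpa [Matrix.conjTranspose_sum, Matrix.conjTranspose_mul, Matrix.conjTranspose_smul,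
      Matrix.mul_assoc] using this
  -- the defect operators
  set M : Fin d → Matrix (Fin D) (Fin D) ℂ := fun k => B k * V - lam • (V * A k) with hMdef
  -- key identity: ∑ M Mᴴ = E(VVᴴ) - VVᴴ
  have hS1 : ∑ k, (B k * V) * (B k * V)ᴴ = ∑ n, A n * (V * Vᴴ) * (A n)ᴴ := by
    rw [← hBsum (V * Vᴴ)]
    exact Finset.sum_congr rfl fun k _ => by
      rw [Matrix.conjTranspose_mul]; noncomm_ring
  have hS2 : ∑ k, (B k * V) * (lam • (V * A k))ᴴ = V * Vᴴ := by
    have : ∀ k, (B k * V) * (lam • (V * A k))ᴴ = star lam • ((B k * V * (A k)ᴴ) * Vᴴ) := by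
      intro k
      rw [Matrix.conjTranspose_smul, Matrix.conjTranspose_mul, mul_smul_comm]
      noncomm_ring
    rw [Finset.sum_congr rfl fun k _ => this k, ← Finset.smul_sum, ← Finset.sum_mul, hEig,
      smul_mul_assoc, smul_smul, hll', one_smul]
  have hS3 : ∑ k, (lam • (V * A k)) * (B k * V)ᴴ = V * Vᴴ := by
    have : ∀ k, (lam • (V * A k)) * (B k * V)ᴴ = lam • (V * (A k * Vᴴ * (B k)ᴴ)) := by
      intro k
      rw [Matrix.conjTranspose_mul, smul_mul_assoc]
      noncomm_ring
    rw [Finset.sum_congr rfl fun k _ => this k, ← Finset.smul_sum, ← Finset.mul_sum, hEig',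
      Matrix.mul_smul, smul_smul, hll, one_smul]
  have hS4 : ∑ k, (lam • (V * A k)) * (lam • (V * A k))ᴴ = V * Vᴴ := by
    have : ∀ k, (lam • (V * A k)) * (lam • (V * A k))ᴴ
        = (lam * star lam) • (V * (A k * (A k)ᴴ) * Vᴴ) := by
      intro k
      rw [Matrix.conjTranspose_smul, Matrix.conjTranspose_mul, smul_mul_assoc, mul_smul_comm,
        smul_smul]
      congr 1
      noncomm_ring
    rw [Finset.sum_congr rfl fun k _ => this k, ← Finset.smul_sum, hll, one_smul]
    have : ∑ k, V * (A k * (A k)ᴴ) * Vᴴ = V * (∑ k, A k * (A k)ᴴ) * Vᴴ := by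
      rw [Finset.mul_sum, Finset.sum_mul]
    rw [this, hA, mul_one]
  have hkey : ∑ k, M k * (M k)ᴴ = (∑ n, A n * (V * Vᴴ) * (A n)ᴴ) - V * Vᴴ := by
    have expand : ∀ k, M k * (M k)ᴴ
        = (B k * V) * (B k * V)ᴴ - (B k * V) * (lam • (V * A k))ᴴ
          - ((lam • (V * A k)) * (B k * V)ᴴ - (lam • (V * A k)) * (lam • (V * A k))ᴴ) := by
      intro k
      rw [hMdef]
      simp only [Matrix.conjTranspose_sub, sub_mul, mul_sub]
      abel
    rw [Finset.sum_congr rfl fun k _ => expand k, Finset.sum_sub_distrib,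
      Finset.sum_sub_distrib, Finset.sum_sub_distrib, hS1, hS2, hS3, hS4]
    abel
  -- positivity of the defect sum
  have hpsd : (∑ k, M k * (M k)ᴴ).PosSemidef :=
    Finset.sum_induction _ _ (fun a b ha hb => ha.add hb) Matrix.PosSemidef.zero
      (fun i _ => Matrix.posSemidef_self_mul_conjTranspose (M i))
  -- trace against Λ vanishes
  have htr : (Λ * ∑ k, M k * (M k)ᴴ).trace = 0 := by
    rw [hkey, mul_sub, Matrix.trace_sub, Finset.mul_sum, Matrix.trace_sum]
    have h1 : ∀ n, (Λ * (A n * (V * Vᴴ) * (A n)ᴴ)).trace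
        = (((A n)ᴴ * Λ * A n) * (V * Vᴴ)).trace := by
      intro n
      rw [show Λ * (A n * (V * Vᴴ) * (A n)ᴴ) = (Λ * (A n * (V * Vᴴ))) * (A n)ᴴ by
        noncomm_ring]
      rw [Matrix.trace_mul_cycle]
      congr 1
      noncomm_ring
    rw [Finset.sum_congr rfl fun n _ => h1 n, ← Matrix.trace_sum, ← Finset.sum_mul,
      hΛfix, sub_self]
  -- hence the defect vanishes
  have hS0 : ∑ k, M k * (M k)ᴴ = 0 := posdef_pair_trace_zero hΛ hpsd htr
  -- each defect operator vanishes
  have hM0 : ∀ k, M k = 0 := by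
    intro k
    have hnn : ∀ j ∈ Finset.univ, (0:ℂ) ≤ (M j * (M j)ᴴ).trace := fun j _ => by
      rw [Matrix.trace]
      exact Finset.sum_nonneg fun i _ =>
        psd_diag_nonneg (Matrix.posSemidef_self_mul_conjTranspose (M j)) i
    have hsum : ∑ j, (M j * (M j)ᴴ).trace = 0 := by
      rw [← Matrix.trace_sum, hS0, Matrix.trace_zero]
    have h0 := (Finset.sum_eq_zero_iff_of_nonneg hnn).mp hsum k (Finset.mem_univ k)
    exact Matrix.self_mul_conjTranspose_eq_zero.mp
      (psd_trace_zero (Matrix.posSemidef_self_mul_conjTranspose (M k)) h0)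
  -- V Vᴴ is a fixed point, hence a multiple of 1
  have hfixeq : ∑ n, A n * (V * Vᴴ) * (A n)ᴴ = V * Vᴴ := by
    have := hS0
    rw [hkey] at this
    exact sub_eq_zero.mp this
  obtain ⟨c, hc⟩ := hfix (V * Vᴴ) hfixeq
  -- c is a positive real
  have hcne : c ≠ 0 := by
    rintro rfl
    rw [zero_smul] at hc
    exact hV (Matrix.self_mul_conjTranspose_eq_zero.mp hc)
  have i0 : Fin D := ⟨0, hD⟩
  have hcnn : (0:ℂ) ≤ c := by
    have := psd_diag_nonneg (Matrix.posSemidef_self_mul_conjTranspose V) i0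
    rwa [hc, Matrix.smul_apply, Matrix.one_apply_eq, smul_eq_mul, mul_one] at this
  have hcim : c.im = 0 := (Complex.le_def.mp hcnn).2.symm
  have hcre : 0 < c.re := by
    rcases lt_or_eq_of_le (Complex.le_def.mp hcnn).1 with h | h
    · simpa using h
    · exfalso; exact hcne (by apply Complex.ext <;> simp [← h, hcim])
  -- the rescaling constant
  set r : ℝ := (Real.sqrt c.re)⁻¹ with hrdef
  have hrpos : 0 < r := inv_pos.mpr (Real.sqrt_pos.mpr hcre)
  have hr2 : (r:ℂ)^2 * c = 1 := by
    have hcr : c = (c.re : ℂ) := by apply Complex.ext <;> simp [hcim]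
    rw [hcr]
    have : (r:ℂ)^2 = ((r^2 : ℝ) : ℂ) := by push_cast; ring
    rw [this, ← Complex.ofReal_mul]
    norm_cast
    rw [hrdef, inv_pow, Real.sq_sqrt hcre.le, inv_mul_cancel₀ hcre.ne']
  have hWW : ((r:ℂ) • V) * ((r:ℂ) • V)ᴴ = 1 := by
    rw [Matrix.conjTranspose_smul, smul_mul_assoc, mul_smul_comm, smul_smul]
    have : star (r:ℂ) = (r:ℂ) := by simp [Complex.star_def]
    rw [this, hc, smul_smul]
    rw [show (r:ℂ) * (r:ℂ) * c = (r:ℂ)^2 * c by ring, hr2, one_smul]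
  refine ⟨r, hrpos, Matrix.mem_unitaryGroup_iff.mpr (by simpa [Matrix.star_eq_conjTranspose] using hWW), fun n => ?_⟩
  -- the intertwining relation
  have hBV : B n * V = lam • (V * A n) := sub_eq_zero.mp (hM0 n)
  have hstep : c • B n = lam • (V * A n * Vᴴ) := by
    have := congrArg (· * Vᴴ) hBV
    simp only [smul_mul_assoc] at this
    rw [Matrix.mul_assoc, hc, mul_smul_comm, mul_one] at this
    rw [this, Matrix.mul_assoc]
  have hgoal : B n = lam • ((r:ℂ)^2 • (V * A n * Vᴴ)) := by
    calc B n = ((r:ℂ)^2 * c) • B n := by rw [hr2, one_smul]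
      _ = (r:ℂ)^2 • (c • B n) := mul_smul _ _ _
      _ = (r:ℂ)^2 • (lam • (V * A n * Vᴴ)) := by rw [hstep]
      _ = lam • ((r:ℂ)^2 • (V * A n * Vᴴ)) := smul_comm _ _ _
  have hRHS : ((r:ℂ) • V) * A n * ((r:ℂ) • V)ᴴ = (r:ℂ)^2 • (V * A n * Vᴴ) := by
    rw [Matrix.conjTranspose_smul]
    have : star (r:ℂ) = (r:ℂ) := by simp [Complex.star_def]
    rw [this, smul_mul_assoc, smul_mul_assoc, mul_smul_comm, smul_smul, sq]
  rw [hRHS, ← hgoal]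
end

section
/- Let u be a d×d complex unitary matrix, θ ∈ ℝ, and let V be a D×D complex matrix (not assumed unitary) such that for every n one has ∑_m u_{n,m}·A_m = e^{iθ}·V * A_n * Vᴴ with V invertible, or more generally such that (∑_m u_{n,m}·A_m) * Vᴴ = e^{iθ}·Vᴴ * A_n for all n. Then E(Vᴴ * V) = Vᴴ * V, i.e. Vᴴ V is a fixed point of the channel E. Consequently, if the only fixed points of E are scalar multiples of the identity, then Vᴴ V is proportional to the identity. -/
open Matrix Complex

/-- If `(∑_m u_{n,m} A_m) Vᴴ = e^{iθ} Vᴴ A_n` for all `n`, then `Vᴴ V` is a fixed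
point of the channel `E(X) = ∑_n A_n X A_nᴴ`; consequently, if `E` has only
trivial fixed points then `Vᴴ V` is proportional to the identity. -/
theorem conjTranspose_mul_self_fixed_point (d D : ℕ) (hd : 1 ≤ d) (hD : 1 ≤ D)
    (A : Fin d → Matrix (Fin D) (Fin D) ℂ)
    (hA : ∑ n : Fin d, A n * (A n)ᴴ = 1)
    (u : Matrix (Fin d) (Fin d) ℂ) (hu : u ∈ Matrix.unitaryGroup (Fin d) ℂ)
    (θ : ℝ) (V : Matrix (Fin D) (Fin D) ℂ)
    (hint : ∀ n : Fin d, (∑ m : Fin d, u n m • A m) * Vᴴ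
      = Complex.exp (θ * Complex.I) • (Vᴴ * A n)) :
    (∑ n : Fin d, A n * (Vᴴ * V) * (A n)ᴴ) = Vᴴ * V ∧
    ((∀ X : Matrix (Fin D) (Fin D) ℂ,
        (∑ n : Fin d, A n * X * (A n)ᴴ) = X →
        ∃ c : ℂ, X = c • (1 : Matrix (Fin D) (Fin D) ℂ)) →
      ∃ c : ℂ, Vᴴ * V = c • (1 : Matrix (Fin D) (Fin D) ℂ)) := by
  set e : ℂ := Complex.exp (θ * Complex.I) with he
  have hnorm : e * (starRingEnd ℂ) e = 1 := by
    rw [he, ← Complex.exp_conj, ← Complex.exp_add]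
    simp [_root_.map_mul, Complex.conj_I, Complex.conj_ofReal]
  set B : Fin d → Matrix (Fin D) (Fin D) ℂ := fun n => ∑ m, u n m • A m with hB
  have hu1 : ∀ m m' : Fin d, (∑ n, u n m * (starRingEnd ℂ) (u n m')) = if m = m' then 1 else 0 := by
    intro m m'
    have h := congrFun (congrFun hu.1 m') m
    simpa [Matrix.mul_apply, Matrix.one_apply, mul_comm, eq_comm] using h
  have key : ∀ X : Matrix (Fin D) (Fin D) ℂ,
      ∑ n, B n * X * (B n)ᴴ = ∑ n, A n * X * (A n)ᴴ := by
    intro X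
    have step : ∀ n, B n * X * (B n)ᴴ
        = ∑ m, ∑ m', (u n m * (starRingEnd ℂ) (u n m')) • (A m * X * (A m')ᴴ) := by
      intro n
      simp [hB, Matrix.sum_mul, Matrix.mul_sum, Matrix.conjTranspose_sum,
        Matrix.conjTranspose_smul, Matrix.smul_mul, Matrix.mul_smul, smul_smul,
        Matrix.mul_assoc]
      rw [Finset.sum_comm]
      simp [Finset.smul_sum, smul_smul, mul_comm]
    rw [Finset.sum_congr rfl fun n _ => step n, Finset.sum_comm]
    refine Finset.sum_congr rfl fun m _ => ?_
    rw [Finset.sum_comm]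
    have : ∀ m' : Fin d, ∑ n, (u n m * (starRingEnd ℂ) (u n m')) • (A m * X * (A m')ᴴ)
        = (if m = m' then (1:ℂ) else 0) • (A m * X * (A m')ᴴ) := by
      intro m'
      rw [← Finset.sum_smul, hu1]
    rw [Finset.sum_congr rfl fun m' _ => this m']
    simp
  have hfix : (∑ n : Fin d, A n * (Vᴴ * V) * (A n)ᴴ) = Vᴴ * V := by
    calc ∑ n, A n * (Vᴴ * V) * (A n)ᴴ
        = ∑ n, B n * (Vᴴ * V) * (B n)ᴴ := (key _).symm
      _ = ∑ n, (B n * Vᴴ) * (B n * Vᴴ)ᴴ := by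
          refine Finset.sum_congr rfl fun n _ => ?_
          simp [Matrix.conjTranspose_mul, Matrix.mul_assoc]
      _ = ∑ n, (e • (Vᴴ * A n)) * (e • (Vᴴ * A n))ᴴ := by
          refine Finset.sum_congr rfl fun n _ => ?_
          rw [hint n]
      _ = ∑ n, (e * (starRingEnd ℂ) e) • (Vᴴ * (A n * (A n)ᴴ) * V) := by
          refine Finset.sum_congr rfl fun n _ => ?_
          simp [Matrix.conjTranspose_smul, Matrix.conjTranspose_mul, smul_smul,
            Matrix.smul_mul, Matrix.mul_smul, Matrix.mul_assoc, mul_comm]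
      _ = Vᴴ * V := by
          rw [hnorm]
          simp only [one_smul, ← Matrix.mul_sum, ← Matrix.sum_mul]
          rw [hA, Matrix.mul_one]
  exact ⟨hfix, fun h => h _ hfix⟩
end

section
/- Let u be a d×d complex unitary matrix, and suppose there exist a D×D unitary matrix V and λ ∈ ℂ with |λ| = 1 such that ∑_m u_{n,m}·A_m = λ·V * A_n * Vᴴ for all n. Then the Hilbert–Schmidt adjoint E_u† of E_u (the unique linear map satisfying tr(Yᴴ · E_u(X)) = tr((E_u†(Y))ᴴ · X) for all X, Y) satisfies E_u†(Λ * V) = conj(λ) · Λ * V. That is, Λ·V is a left eigenvector of E_u corresponding to its modulus-one eigenvalue. -/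
open Matrix Complex
open scoped ComplexOrder

/-- The Hilbert–Schmidt adjoint of `E_O`:
`E_O†(Y) = ∑_{n,n'} conj(O_{n',n}) · (A_n)ᴴ Y A_{n'}`. -/
noncomputable def EOadj {d D : ℕ} (A : Fin d → Matrix (Fin D) (Fin D) ℂ)
    (O : Matrix (Fin d) (Fin d) ℂ) (Y : Matrix (Fin D) (Fin D) ℂ) :
    Matrix (Fin D) (Fin D) ℂ :=
  ∑ n : Fin d, ∑ n' : Fin d, (starRingEnd ℂ) (O n' n) • ((A n)ᴴ * Y * A n')

/-- `Λ V` is a left eigenvector of `E_u` for its modulus-one eigenvalue: the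
Hilbert–Schmidt adjoint `E_u†` (characterized by
`tr(Yᴴ E_u(X)) = tr((E_u†(Y))ᴴ X)`) satisfies `E_u†(Λ V) = conj(λ) Λ V`. -/
theorem left_eigenvector (d D : ℕ) (hd : 1 ≤ d) (hD : 1 ≤ D)
    (A : Fin d → Matrix (Fin D) (Fin D) ℂ)
    (hA : ∑ n : Fin d, A n * (A n)ᴴ = 1)
    (Λ : Matrix (Fin D) (Fin D) ℂ) (hΛ : Λ.PosDef) (hΛtr : Λ.trace = 1)
    (hΛfix : ∑ n : Fin d, (A n)ᴴ * Λ * A n = Λ)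
    (u : Matrix (Fin d) (Fin d) ℂ) (hu : u ∈ Matrix.unitaryGroup (Fin d) ℂ)
    (V : Matrix (Fin D) (Fin D) ℂ) (hV : V ∈ Matrix.unitaryGroup (Fin D) ℂ)
    (lam : ℂ) (hlam : ‖lam‖ = 1)
    (hint : ∀ n : Fin d, ∑ m : Fin d, u n m • A m = lam • (V * A n * Vᴴ)) :
    (∀ X Y : Matrix (Fin D) (Fin D) ℂ,
        (Yᴴ * EO A u X).trace = ((EOadj A u Y)ᴴ * X).trace) ∧
    EOadj A u (Λ * V) = (starRingEnd ℂ) lam • (Λ * V) := by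

  have hVl : Vᴴ * V = 1 := by
    simpa [Matrix.star_eq_conjTranspose] using (Matrix.mem_unitaryGroup_iff'.mp hV)
  have hVr : V * Vᴴ = 1 := by
    simpa [Matrix.star_eq_conjTranspose] using (Matrix.mem_unitaryGroup_iff.mp hV)
  have hu' : star u * u = 1 := Matrix.mem_unitaryGroup_iff'.mp hu
  have hlam2 : (starRingEnd ℂ) lam * lam = 1 := by
    have h := Complex.normSq_eq_norm_sq lam
    rw [hlam] at h
    rw [mul_comm, Complex.mul_conj, h]
    norm_num
  have hkey : ∀ n : Fin d, ∑ n' : Fin d, (starRingEnd ℂ) (u n' n) • A n'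
      = (starRingEnd ℂ) lam • (Vᴴ * A n * V) := by
    intro n
    have h1 : ∑ n' : Fin d, (starRingEnd ℂ) (u n' n) • (lam • (V * A n' * Vᴴ)) = A n := by
      calc ∑ n' : Fin d, (starRingEnd ℂ) (u n' n) • (lam • (V * A n' * Vᴴ))
          = ∑ n' : Fin d, (starRingEnd ℂ) (u n' n) • ∑ m : Fin d, u n' m • A m := by
            simp_rw [hint]
        _ = ∑ m : Fin d, (∑ n' : Fin d, (starRingEnd ℂ) (u n' n) * u n' m) • A m := by
            simp_rw [Finset.smul_sum, smul_smul]
            rw [Finset.sum_comm]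
            simp_rw [Finset.sum_smul]
        _ = A n := by
            have hentry : ∀ m : Fin d, (∑ n' : Fin d, (starRingEnd ℂ) (u n' n) * u n' m)
                = (1 : Matrix (Fin d) (Fin d) ℂ) n m := by
              intro m
              rw [← hu', Matrix.mul_apply]
              refine Finset.sum_congr rfl fun j _ => ?_
              rw [Matrix.star_apply, starRingEnd_apply]
            simp_rw [hentry]
            simp [Matrix.one_apply, ite_smul, Finset.sum_ite_eq]
    have h2 : lam • ∑ n' : Fin d, (starRingEnd ℂ) (u n' n) • (V * A n' * Vᴴ) = A n := by
      rw [Finset.smul_sum]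
      simp_rw [smul_comm lam]
      exact h1
    have h3 : ∑ n' : Fin d, (starRingEnd ℂ) (u n' n) • (V * A n' * Vᴴ)
        = (starRingEnd ℂ) lam • A n := by
      have := congrArg (fun M => (starRingEnd ℂ) lam • M) h2
      simpa [smul_smul, hlam2] using this
    calc ∑ n' : Fin d, (starRingEnd ℂ) (u n' n) • A n'
        = Vᴴ * (∑ n' : Fin d, (starRingEnd ℂ) (u n' n) • (V * A n' * Vᴴ)) * V := by
          rw [Matrix.mul_sum, Matrix.sum_mul]
          refine Finset.sum_congr rfl fun n' _ => ?_
          rw [Matrix.mul_smul, Matrix.smul_mul]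
          congr 1
          symm
          calc Vᴴ * (V * A n' * Vᴴ) * V
              = (Vᴴ * V) * A n' * (Vᴴ * V) := by
                simp only [Matrix.mul_assoc]
            _ = A n' := by rw [hVl]; simp
      _ = (starRingEnd ℂ) lam • (Vᴴ * A n * V) := by
          rw [h3, Matrix.mul_smul, Matrix.smul_mul]
  constructor
  · intro X Y
    simp only [EO, EOadj, Matrix.mul_sum, Matrix.sum_mul, Matrix.conjTranspose_sum,
      Matrix.trace_sum, Matrix.mul_smul, Matrix.smul_mul, Matrix.conjTranspose_smul,
      Matrix.trace_smul]
    refine Finset.sum_congr rfl fun n _ => Finset.sum_congr rfl fun n' _ => ?_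
    rw [starRingEnd_apply, star_star]
    congr 1
    rw [Matrix.conjTranspose_mul, Matrix.conjTranspose_mul, Matrix.conjTranspose_conjTranspose]
    rw [show Yᴴ * (A n * X * (A n')ᴴ) = (Yᴴ * (A n * X)) * (A n')ᴴ from by
      simp only [Matrix.mul_assoc]]
    rw [Matrix.trace_mul_comm]
    simp only [Matrix.mul_assoc]
  · calc EOadj A u (Λ * V)
        = ∑ n : Fin d, (A n)ᴴ * (Λ * V) * (∑ n' : Fin d, (starRingEnd ℂ) (u n' n) • A n') := by
          unfold EOadj
          refine Finset.sum_congr rfl fun n _ => ?_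
          rw [Matrix.mul_sum]
          refine Finset.sum_congr rfl fun n' _ => ?_
          rw [Matrix.mul_smul]
      _ = ∑ n : Fin d, (starRingEnd ℂ) lam • ((A n)ᴴ * Λ * A n * V) := by
          refine Finset.sum_congr rfl fun n _ => ?_
          rw [hkey n, Matrix.mul_smul]
          congr 1
          calc (A n)ᴴ * (Λ * V) * (Vᴴ * A n * V)
              = (A n)ᴴ * Λ * (V * Vᴴ) * A n * V := by simp only [Matrix.mul_assoc]
            _ = (A n)ᴴ * Λ * A n * V := by rw [hVr]; simp [Matrix.mul_assoc]
      _ = (starRingEnd ℂ) lam • (Λ * V) := by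
          rw [← Finset.smul_sum]
          congr 1
          rw [← Matrix.sum_mul, hΛfix]
end

section
/- Let u be a d×d complex unitary matrix, and suppose there exist a D×D unitary matrix V and λ ∈ ℂ with |λ| = 1 such that ∑_m u_{n,m}·A_m = λ·V * A_n * Vᴴ for all n. Assume in addition that the only D×D matrices Y with ∑_n (A_n)ᴴ * Y * A_n = Y are the scalar multiples of Λ. Then Vᴴ * Λ * V = Λ, i.e. conjugation by the unitary V leaves Λ invariant. -/
open Matrix Complex
open scoped ComplexOrder

lemma conj_mul_conj {D : ℕ} (V : Matrix (Fin D) (Fin D) ℂ)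
    (hV2 : V * Vᴴ = 1) (X Y : Matrix (Fin D) (Fin D) ℂ) :
    (Vᴴ * X * V) * (Vᴴ * Y * V) = Vᴴ * (X * Y) * V := by
  simp only [Matrix.mul_assoc]
  rw [← Matrix.mul_assoc V Vᴴ, hV2, Matrix.one_mul]

/-- If `V` is a unitary intertwiner (`∑_m u_{n,m} A_m = λ V A_n Vᴴ`, `|λ| = 1`)
and `Λ` is the unique (up to scalars) solution of `∑_n A_nᴴ Y A_n = Y`, then
conjugation by `V` leaves `Λ` invariant: `Vᴴ Λ V = Λ`. -/
theorem lambda_invariant (d D : ℕ) (hd : 1 ≤ d) (hD : 1 ≤ D)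
    (A : Fin d → Matrix (Fin D) (Fin D) ℂ)
    (hA : ∑ n : Fin d, A n * (A n)ᴴ = 1)
    (Λ : Matrix (Fin D) (Fin D) ℂ) (hΛ : Λ.PosDef) (hΛtr : Λ.trace = 1)
    (hΛfix : ∑ n : Fin d, (A n)ᴴ * Λ * A n = Λ)
    (u : Matrix (Fin d) (Fin d) ℂ) (hu : u ∈ Matrix.unitaryGroup (Fin d) ℂ)
    (V : Matrix (Fin D) (Fin D) ℂ) (hV : V ∈ Matrix.unitaryGroup (Fin D) ℂ)
    (lam : ℂ) (hlam : ‖lam‖ = 1)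
    (hint : ∀ n : Fin d, ∑ m : Fin d, u n m • A m = lam • (V * A n * Vᴴ))
    (hΛuniq : ∀ Y : Matrix (Fin D) (Fin D) ℂ,
      (∑ n : Fin d, (A n)ᴴ * Y * A n) = Y → ∃ c : ℂ, Y = c • Λ) :
    Vᴴ * Λ * V = Λ := by
  have hV1 : Vᴴ * V = 1 := by simpa [Matrix.star_eq_conjTranspose] using hV.1
  have hV2 : V * Vᴴ = 1 := by simpa [Matrix.star_eq_conjTranspose] using hV.2
  have hu1 : uᴴ * u = 1 := by simpa [Matrix.star_eq_conjTranspose] using hu.1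
  have hlam1 : (starRingEnd ℂ) lam * lam = 1 := by
    have : lam * (starRingEnd ℂ) lam = ((‖lam‖ : ℝ) : ℂ) ^ 2 := by
      rw [Complex.mul_conj]
      norm_cast
      rw [Complex.normSq_eq_norm_sq]
    rw [mul_comm] at this
    rw [this, hlam]
    norm_num
  -- A n conjugated back
  have hAn : ∀ n, lam • A n = Vᴴ * (∑ m, u n m • A m) * V := by
    intro n
    rw [hint n, Matrix.mul_smul, Matrix.smul_mul]
    congr 1
    simp only [← Matrix.mul_assoc]
    rw [hV1, Matrix.one_mul, Matrix.mul_assoc, hV1, Matrix.mul_one]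
  -- the conjugated Λ is also a fixed point
  have hfix : ∑ n : Fin d, (A n)ᴴ * (Vᴴ * Λ * V) * A n = Vᴴ * Λ * V := by
    have expand : ∀ n : Fin d, (A n)ᴴ * (Vᴴ * Λ * V) * A n =
        Vᴴ * ((∑ m, u n m • A m)ᴴ * Λ * (∑ m, u n m • A m)) * V := by
      intro n
      have e1 : (lam • A n)ᴴ * (Vᴴ * Λ * V) * (lam • A n)
          = ((starRingEnd ℂ) lam * lam) • ((A n)ᴴ * (Vᴴ * Λ * V) * A n) := by
        simp [Matrix.conjTranspose_smul, Matrix.smul_mul, Matrix.mul_smul, smul_smul,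
          mul_comm]
      have e2 : (lam • A n)ᴴ * (Vᴴ * Λ * V) * (lam • A n)
          = Vᴴ * ((∑ m, u n m • A m)ᴴ * Λ * (∑ m, u n m • A m)) * V := by
        rw [hAn n]
        have hct : (Vᴴ * (∑ m, u n m • A m) * V)ᴴ
            = Vᴴ * (∑ m, u n m • A m)ᴴ * V := by
          simp [Matrix.conjTranspose_mul, Matrix.mul_assoc]
        rw [hct, conj_mul_conj V hV2, conj_mul_conj V hV2, Matrix.mul_assoc]
      rw [e1, hlam1, one_smul] at e2
      exact e2
    calc ∑ n : Fin d, (A n)ᴴ * (Vᴴ * Λ * V) * A n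
        = ∑ n : Fin d, Vᴴ * ((∑ m, u n m • A m)ᴴ * Λ * (∑ m, u n m • A m)) * V := by
          exact Finset.sum_congr rfl fun n _ => expand n
      _ = Vᴴ * (∑ n : Fin d, (∑ m, u n m • A m)ᴴ * Λ * (∑ m, u n m • A m)) * V := by
          simp [Matrix.mul_sum, Matrix.sum_mul]
      _ = Vᴴ * Λ * V := by
          congr 1
          congr 1
          -- expand the double sum
          have : ∀ n : Fin d, (∑ m, u n m • A m)ᴴ * Λ * (∑ m, u n m • A m)
              = ∑ m, ∑ k, ((starRingEnd ℂ) (u n m) * u n k) •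
                  ((A m)ᴴ * Λ * A k) := by
            intro n
            rw [Matrix.conjTranspose_sum]
            simp only [Matrix.conjTranspose_smul]
            rw [Finset.sum_mul, Finset.sum_mul]
            refine Finset.sum_congr rfl fun m _ => ?_
            rw [Matrix.mul_sum]
            refine Finset.sum_congr rfl fun k _ => ?_
            simp only [Matrix.smul_mul, Matrix.mul_smul, smul_smul]
            rw [mul_comm]
            simp [RCLike.star_def]
          simp only [this]
          rw [Finset.sum_comm]
          have key : ∀ m : Fin d, ∑ n : Fin d, ∑ k : Fin d,
              ((starRingEnd ℂ) (u n m) * u n k) • ((A m)ᴴ * Λ * A k)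
              = (A m)ᴴ * Λ * A m := by
            intro m
            rw [Finset.sum_comm]
            have huent : ∀ k : Fin d, (∑ n : Fin d, (starRingEnd ℂ) (u n m) * u n k)
                = if m = k then 1 else 0 := by
              intro k
              have : (uᴴ * u) m k = (1 : Matrix (Fin d) (Fin d) ℂ) m k := by rw [hu1]
              simpa [Matrix.mul_apply, Matrix.conjTranspose_apply, Matrix.one_apply,
                RCLike.star_def] using this
            calc ∑ k : Fin d, ∑ n : Fin d,
                  ((starRingEnd ℂ) (u n m) * u n k) • ((A m)ᴴ * Λ * A k)
                = ∑ k : Fin d, (∑ n : Fin d, (starRingEnd ℂ) (u n m) * u n k) •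
                    ((A m)ᴴ * Λ * A k) := by
                  refine Finset.sum_congr rfl fun k _ => ?_
                  rw [Finset.sum_smul]
              _ = ∑ k : Fin d, (if m = k then (1:ℂ) else 0) • ((A m)ᴴ * Λ * A k) := by
                  simp only [huent]
              _ = (A m)ᴴ * Λ * A m := by
                  simp [Finset.sum_ite_eq]
          calc ∑ m : Fin d, ∑ n : Fin d, ∑ k : Fin d,
                ((starRingEnd ℂ) (u n m) * u n k) • ((A m)ᴴ * Λ * A k)
              = ∑ m : Fin d, (A m)ᴴ * Λ * A m := Finset.sum_congr rfl fun m _ => key m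
            _ = Λ := hΛfix
  obtain ⟨c, hc⟩ := hΛuniq _ hfix
  have htr : (Vᴴ * Λ * V).trace = 1 := by
    rw [Matrix.mul_assoc, Matrix.trace_mul_comm, Matrix.mul_assoc, hV2,
      Matrix.mul_one, hΛtr]
  have : c = 1 := by
    have := htr
    rw [hc, Matrix.trace_smul, hΛtr, smul_eq_mul, mul_one] at this
    exact this
  rw [hc, this, one_smul]
end

section
/- For each m ≥ 1 let S_m ⊆ Matrix (Fin D) (Fin D) ℂ denote the linear span of all products A_{n_1}···A_{n_m} · (A_{k_m})ᴴ···(A_{k_1})ᴴ over all index tuples in (Fin d)^m. Assume the injectivity condition: there exists N₀ such that the linear span of {A_{n_1}···A_{n_{N₀}} : (n_1,…,n_{N₀}) ∈ (Fin d)^{N₀}} is all of Matrix (Fin D) (Fin D) ℂ, and that this then also holds for every N ≥ N₀. Then S_{D²} = Matrix (Fin D) (Fin D) ℂ, i.e. the products of length D² together with their adjoints already span the full matrix algebra. -/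
open Matrix Complex

/-- `S_m` : the span of all products `A_{n_1} ⋯ A_{n_m} (A_{k_m})ᴴ ⋯ (A_{k_1})ᴴ`. -/
noncomputable def Sspan {d D : ℕ} (A : Fin d → Matrix (Fin D) (Fin D) ℂ) (m : ℕ) :
    Submodule ℂ (Matrix (Fin D) (Fin D) ℂ) :=
  Submodule.span ℂ {X | ∃ ns ks : Fin m → Fin d,
    X = (List.ofFn fun i => A (ns i)).prod * ((List.ofFn fun i => A (ks i)).prod)ᴴ}

variable {d D : ℕ} (A : Fin d → Matrix (Fin D) (Fin D) ℂ)

noncomputable def Lmap (n k : Fin d) :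
    Matrix (Fin D) (Fin D) ℂ →ₗ[ℂ] Matrix (Fin D) (Fin D) ℂ where
  toFun x := A n * x * (A k)ᴴ
  map_add' x y := by simp [Matrix.mul_add, Matrix.add_mul]
  map_smul' c x := by simp [Matrix.mul_smul, Matrix.smul_mul]

noncomputable def Phi (W : Submodule ℂ (Matrix (Fin D) (Fin D) ℂ)) :
    Submodule ℂ (Matrix (Fin D) (Fin D) ℂ) :=
  ⨆ n : Fin d, ⨆ k : Fin d, W.map (Lmap A n k)

lemma Sspan_succ (m : ℕ) : Sspan A (m + 1) = Phi A (Sspan A m) := by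
  unfold Phi Sspan
  simp_rw [Submodule.map_span, ← Submodule.span_iUnion]
  congr 1
  ext X
  constructor
  · rintro ⟨ns, ks, rfl⟩
    simp only [Set.mem_iUnion, Set.mem_image]
    refine ⟨ns 0, ks 0, (List.ofFn fun i => A (ns i.succ)).prod *
      ((List.ofFn fun i => A (ks i.succ)).prod)ᴴ,
      ⟨fun i => ns i.succ, fun i => ks i.succ, rfl⟩, ?_⟩
    simp [Lmap, List.ofFn_succ, conjTranspose_mul, mul_assoc]
  · rintro hX
    simp only [Set.mem_iUnion, Set.mem_image] at hX
    obtain ⟨n, k, x, ⟨ns, ks, rfl⟩, rfl⟩ := hX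
    refine ⟨Fin.cons n ns, Fin.cons k ks, ?_⟩
    simp [Lmap, List.ofFn_succ, conjTranspose_mul, mul_assoc]

lemma Phi_mono {W W' : Submodule ℂ (Matrix (Fin D) (Fin D) ℂ)} (h : W ≤ W') :
    Phi A W ≤ Phi A W' :=
  iSup_mono fun n => iSup_mono fun k => Submodule.map_mono h

lemma Sspan_le_succ (hA : ∑ n : Fin d, A n * (A n)ᴴ = 1) (m : ℕ) :
    Sspan A m ≤ Sspan A (m + 1) := by
  rw [Sspan]
  apply Submodule.span_le.2
  rintro X ⟨ns, ks, rfl⟩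
  have key : (List.ofFn fun i => A (ns i)).prod * ((List.ofFn fun i => A (ks i)).prod)ᴴ
      = ∑ n : Fin d, ((List.ofFn fun i => A (ns i)).prod * A n) *
        (((List.ofFn fun i => A (ks i)).prod * A n))ᴴ := by
    calc (List.ofFn fun i => A (ns i)).prod * ((List.ofFn fun i => A (ks i)).prod)ᴴ
        = (List.ofFn fun i => A (ns i)).prod * (∑ n : Fin d, A n * (A n)ᴴ) *
          ((List.ofFn fun i => A (ks i)).prod)ᴴ := by rw [hA, mul_one]
      _ = _ := by
          rw [Finset.mul_sum, Finset.sum_mul]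
          refine Finset.sum_congr rfl fun n _ => ?_
          rw [conjTranspose_mul]
          noncomm_ring
  rw [key]
  refine Submodule.sum_mem _ fun n _ => Submodule.subset_span ?_
  refine ⟨(Fin.snoc ns n : Fin (m+1) → Fin d), (Fin.snoc ks n : Fin (m+1) → Fin d), ?_⟩
  have h1 : ∀ f : Fin m → Fin d,
      (List.ofFn fun i => A ((Fin.snoc f n : Fin (m+1) → Fin d) i)).prod = (List.ofFn fun i => A (f i)).prod * A n := by
    intro f
    rw [List.ofFn_succ']
    simp [List.concat_eq_append]
  rw [h1, h1]

lemma Sspan_stab {m : ℕ} (h : Sspan A m = Sspan A (m + 1)) :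
    ∀ k, m ≤ k → Sspan A k = Sspan A m := by
  intro k hk
  induction k with
  | zero => have : m = 0 := by omega
            rw [this]
  | succ k ih =>
      rcases Nat.lt_or_ge m (k + 1) with h1 | h1
      · have hk' : m ≤ k := by omega
        rw [Sspan_succ, ih hk', ← Sspan_succ, ← h]
      · have : m = k + 1 := by omega
        rw [this]

lemma Sspan_eq_top_of (N : ℕ)
    (hT : Submodule.span ℂ {X : Matrix (Fin D) (Fin D) ℂ |
        ∃ ns : Fin N → Fin d, X = (List.ofFn fun i => A (ns i)).prod} = ⊤) :
    Sspan A N = ⊤ := by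
  set T : Set (Matrix (Fin D) (Fin D) ℂ) :=
    {X | ∃ ns : Fin N → Fin d, X = (List.ofFn fun i => A (ns i)).prod} with hTdef
  have key : ∀ X ∈ Submodule.span ℂ T, ∀ Y ∈ Submodule.span ℂ T,
      X * Yᴴ ∈ Sspan A N := by
    intro X hX
    induction hX using Submodule.span_induction with
    | mem x hx =>
        intro Y hY
        induction hY using Submodule.span_induction with
        | mem y hy =>
            obtain ⟨ns, rfl⟩ := hx
            obtain ⟨ks, rfl⟩ := hy
            exact Submodule.subset_span ⟨ns, ks, rfl⟩
        | zero => simpa using (Sspan A N).zero_mem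
        | add y z _ _ hy hz =>
            rw [conjTranspose_add, Matrix.mul_add]
            exact (Sspan A N).add_mem hy hz
        | smul c y _ hy =>
            rw [conjTranspose_smul, Matrix.mul_smul]
            exact (Sspan A N).smul_mem _ hy
    | zero => intro Y hY; simpa using (Sspan A N).zero_mem
    | add x y _ _ hx hy =>
        intro Y hY
        rw [Matrix.add_mul]
        exact (Sspan A N).add_mem (hx Y hY) (hy Y hY)
    | smul c x _ hx =>
        intro Y hY
        rw [Matrix.smul_mul]
        exact (Sspan A N).smul_mem _ (hx Y hY)
  rw [eq_top_iff]
  intro B _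
  have h1 : (1 : Matrix (Fin D) (Fin D) ℂ) ∈ Submodule.span ℂ T := by rw [hT]; trivial
  have hB : B ∈ Submodule.span ℂ T := by rw [hT]; trivial
  simpa using key B hB 1 h1

lemma exists_stab (hD : 1 ≤ D) (hA : ∑ n : Fin d, A n * (A n)ᴴ = 1) :
    ∃ m, m < D ^ 2 ∧ Sspan A m = Sspan A (m + 1) := by
  haveI : NeZero D := ⟨by omega⟩
  by_contra h
  push_neg at h
  have hlt : ∀ m, m < D ^ 2 → Sspan A m < Sspan A (m + 1) :=
    fun m hm => lt_of_le_of_ne (Sspan_le_succ A hA m) (h m hm)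
  have hrank : ∀ m, m ≤ D ^ 2 → m + 1 ≤ Module.finrank ℂ (Sspan A m) := by
    intro m
    induction m with
    | zero =>
        intro _
        have h1 : (1 : Matrix (Fin D) (Fin D) ℂ) ∈ Sspan A 0 :=
          Submodule.subset_span ⟨finZeroElim, finZeroElim, by simp⟩
        rcases Nat.eq_zero_or_pos (Module.finrank ℂ (Sspan A 0)) with h0 | h0
        · rw [Submodule.finrank_eq_zero] at h0
          rw [h0] at h1
          exact absurd (Submodule.mem_bot ℂ |>.mp h1) one_ne_zero
        · omega
    | succ m ih =>
        intro hm
        have h1 := ih (by omega)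
        have h2 := Submodule.finrank_lt_finrank_of_lt (hlt m (by omega))
        omega
  have h3 := hrank (D ^ 2) le_rfl
  have h4 := Submodule.finrank_le (Sspan A (D ^ 2))
  have h5 : Module.finrank ℂ (Matrix (Fin D) (Fin D) ℂ) = D ^ 2 := by
    rw [Module.finrank_matrix]
    simp [pow_two]
  omega


/-- Under the injectivity condition (for all sufficiently long blocks the
products `A_{n_1} ⋯ A_{n_N}` span the full matrix algebra), already the products
of length `D²` together with their adjoints span everything: `S_{D²} = M_D`. -/
theorem Sspan_top (d D : ℕ) (hd : 1 ≤ d) (hD : 1 ≤ D)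
    (A : Fin d → Matrix (Fin D) (Fin D) ℂ)
    (hA : ∑ n : Fin d, A n * (A n)ᴴ = 1)
    (hinj : ∃ N₀ : ℕ, ∀ N : ℕ, N₀ ≤ N →
      Submodule.span ℂ {X : Matrix (Fin D) (Fin D) ℂ |
        ∃ ns : Fin N → Fin d, X = (List.ofFn fun i => A (ns i)).prod} = ⊤) :
    Sspan A (D ^ 2) = ⊤ := by
  obtain ⟨N₀, hN₀⟩ := hinj
  obtain ⟨m, hm, hstab⟩ := exists_stab A hD hA
  have hall := Sspan_stab A hstab
  have hN : Sspan A (max N₀ m) = ⊤ := Sspan_eq_top_of A _ (hN₀ _ (le_max_left _ _))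
  rw [hall (D ^ 2) (by omega), ← hall (max N₀ m) (le_max_right _ _), hN]
end

section
/- For N ≥ 1 define the N-site reduced density matrix ρ_N of the finitely correlated state as the d^N × d^N matrix with entries ⟨n_1…n_N| ρ_N |m_1…m_N⟩ = tr((A_{m_N})ᴴ···(A_{m_1})ᴴ · Λ · A_{n_1}···A_{n_N}). Let u be a d×d unitary and suppose there exist a D×D unitary V and λ ∈ ℂ with |λ| = 1 such that ∑_m u_{n,m}·A_m = λ·V * A_n * Vᴴ for all n and such that Vᴴ * Λ * V = Λ. Then for every N ≥ 1, u^{⊗N} · ρ_N · (uᴴ)^{⊗N} = ρ_N, i.e. the state has the local symmetry u. -/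
open Matrix Complex
open scoped ComplexOrder

/-- The `N`-site reduced density matrix of the finitely correlated state:
`⟨n_1…n_N| ρ_N |m_1…m_N⟩ = tr((A_{m_N})ᴴ ⋯ (A_{m_1})ᴴ Λ A_{n_1} ⋯ A_{n_N})`. -/
noncomputable def rhoN {d D : ℕ} (A : Fin d → Matrix (Fin D) (Fin D) ℂ)
    (Λ : Matrix (Fin D) (Fin D) ℂ) (N : ℕ) :
    Matrix (Fin N → Fin d) (Fin N → Fin d) ℂ :=
  fun n m => (((List.ofFn fun i => A (m i)).prod)ᴴ * Λ *
    (List.ofFn fun i => A (n i)).prod).trace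

/-- The `N`-fold tensor (Kronecker) power `u^{⊗N}` of a `d×d` matrix. -/
noncomputable def tensorPow {d : ℕ} (u : Matrix (Fin d) (Fin d) ℂ) (N : ℕ) :
    Matrix (Fin N → Fin d) (Fin N → Fin d) ℂ :=
  fun n m => ∏ i : Fin N, u (n i) (m i)

lemma intertwine_prod {d D : ℕ} (A : Fin d → Matrix (Fin D) (Fin D) ℂ)
    (u : Matrix (Fin d) (Fin d) ℂ)
    (V : Matrix (Fin D) (Fin D) ℂ) (hV : V ∈ Matrix.unitaryGroup (Fin D) ℂ)
    (lam : ℂ)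
    (hint : ∀ n : Fin d, ∑ m : Fin d, u n m • A m = lam • (V * A n * Vᴴ)) :
    ∀ (N : ℕ) (n : Fin N → Fin d),
      ∑ p : Fin N → Fin d, (∏ i, u (n i) (p i)) • (List.ofFn fun i => A (p i)).prod
        = lam ^ N • (V * (List.ofFn fun i => A (n i)).prod * Vᴴ) := by
  have hVVh : V * Vᴴ = 1 := Matrix.mem_unitaryGroup_iff.mp hV
  have hVhV : Vᴴ * V = 1 := Matrix.mem_unitaryGroup_iff'.mp hV
  intro N
  induction N with
  | zero =>
    intro n
    simp [hVVh]
  | succ N ih =>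
    intro n
    have hsum : ∑ p : Fin (N+1) → Fin d,
        (∏ i, u (n i) (p i)) • (List.ofFn fun i => A (p i)).prod
        = ∑ a : Fin d, ∑ q : Fin N → Fin d,
            (∏ i, u (n i) ((Fin.cons a q : Fin (N+1) → Fin d) i)) •
              (List.ofFn fun i => A ((Fin.cons a q : Fin (N+1) → Fin d) i)).prod := by
      have h := Equiv.sum_comp (Fin.consEquiv fun _ => Fin d)
        (fun p : Fin (N+1) → Fin d =>
          (∏ i, u (n i) (p i)) • (List.ofFn fun i => A (p i)).prod)
      rw [Fintype.sum_prod_type] at h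
      exact h.symm
    rw [hsum]
    have step : ∀ (a : Fin d) (q : Fin N → Fin d),
        (∏ i, u (n i) ((Fin.cons a q : Fin (N+1) → Fin d) i)) •
          (List.ofFn fun i => A ((Fin.cons a q : Fin (N+1) → Fin d) i)).prod
        = u (n 0) a • (A a *
            ((∏ i, u (n i.succ) (q i)) • (List.ofFn fun i => A (q i)).prod)) := by
      intro a q
      rw [Fin.prod_univ_succ]
      simp only [Fin.cons_zero, Fin.cons_succ, List.ofFn_succ, List.prod_cons,
        Matrix.mul_smul, smul_smul]
    simp only [step]
    have hmid : ∀ a : Fin d,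
        ∑ q : Fin N → Fin d, u (n 0) a • (A a *
            ((∏ i, u (n i.succ) (q i)) • (List.ofFn fun i => A (q i)).prod))
        = u (n 0) a • (A a * (lam ^ N •
            (V * (List.ofFn fun i => A (n i.succ)).prod * Vᴴ))) := by
      intro a
      rw [← Finset.smul_sum, ← Matrix.mul_sum, ih (fun i => n i.succ)]
    simp only [hmid]
    set P := (List.ofFn fun i => A (n i.succ)).prod with hP
    have hcollect : ∑ a : Fin d, u (n 0) a •
          (A a * (lam ^ N • (V * P * Vᴴ)))
        = lam ^ N • ((∑ a : Fin d, u (n 0) a • A a) * (V * P * Vᴴ)) := by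
      rw [Matrix.sum_mul, Finset.smul_sum]
      refine Finset.sum_congr rfl fun a _ => ?_
      rw [Matrix.mul_smul, Matrix.smul_mul, smul_smul, smul_smul, mul_comm]
    rw [hcollect, hint (n 0), List.ofFn_succ, List.prod_cons]
    have hmat : (V * A (n 0) * Vᴴ) * (V * P * Vᴴ) = V * (A (n 0) * P) * Vᴴ := by
      calc (V * A (n 0) * Vᴴ) * (V * P * Vᴴ)
          = V * A (n 0) * (Vᴴ * V) * (P * Vᴴ) := by
            simp only [Matrix.mul_assoc]
        _ = V * (A (n 0) * P) * Vᴴ := by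
            rw [hVhV, Matrix.mul_one]; simp only [Matrix.mul_assoc]
    rw [Matrix.smul_mul, smul_smul, hmat, pow_succ, mul_comm]


/-- If a unitary `V` intertwines the `A`'s (`∑_m u_{n,m} A_m = λ V A_n Vᴴ`,
`|λ| = 1`) and leaves `Λ` invariant, then `u` is a local symmetry of the state:
`u^{⊗N} ρ_N (uᴴ)^{⊗N} = ρ_N` for every `N ≥ 1`. -/
theorem local_symmetry_of_intertwiner (d D : ℕ) (hd : 1 ≤ d) (hD : 1 ≤ D)
    (A : Fin d → Matrix (Fin D) (Fin D) ℂ)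
    (hA : ∑ n : Fin d, A n * (A n)ᴴ = 1)
    (Λ : Matrix (Fin D) (Fin D) ℂ) (hΛ : Λ.PosDef) (hΛtr : Λ.trace = 1)
    (hΛfix : ∑ n : Fin d, (A n)ᴴ * Λ * A n = Λ)
    (u : Matrix (Fin d) (Fin d) ℂ) (hu : u ∈ Matrix.unitaryGroup (Fin d) ℂ)
    (V : Matrix (Fin D) (Fin D) ℂ) (hV : V ∈ Matrix.unitaryGroup (Fin D) ℂ)
    (lam : ℂ) (hlam : ‖lam‖ = 1)
    (hint : ∀ n : Fin d, ∑ m : Fin d, u n m • A m = lam • (V * A n * Vᴴ))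
    (hΛinv : Vᴴ * Λ * V = Λ) :
    ∀ N : ℕ, 1 ≤ N →
      tensorPow u N * rhoN A Λ N * tensorPow uᴴ N = rhoN A Λ N := by
  have hVhV : Vᴴ * V = 1 := Matrix.mem_unitaryGroup_iff'.mp hV
  have key := intertwine_prod A u V hV lam hint
  intro N _
  ext n m
  set P : (Fin N → Fin d) → Matrix (Fin D) (Fin D) ℂ :=
    fun p => (List.ofFn fun i => A (p i)).prod with hPdef
  set c : (Fin N → Fin d) → (Fin N → Fin d) → ℂ :=
    fun n p => ∏ i, u (n i) (p i) with hcdef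
  -- the weighted sum of products
  have hS : ∀ x : Fin N → Fin d,
      ∑ p : Fin N → Fin d, c x p • P p = lam ^ N • (V * P x * Vᴴ) := key N
  -- Step 1: the LHS entry equals a trace of a triple product of sums
  have expand :
      (tensorPow u N * rhoN A Λ N * tensorPow uᴴ N) n m
        = ((∑ q : Fin N → Fin d, c m q • P q)ᴴ * Λ *
            (∑ p : Fin N → Fin d, c n p • P p)).trace := by
    simp only [conjTranspose_sum, conjTranspose_smul, Matrix.sum_mul,
      Matrix.mul_sum, Matrix.smul_mul, Matrix.mul_smul, smul_smul,
      Matrix.trace_sum, Matrix.trace_smul]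
    simp only [Matrix.mul_apply, tensorPow, rhoN, hcdef, hPdef,
      Matrix.conjTranspose_apply, smul_eq_mul]
    simp only [Finset.sum_mul, Finset.mul_sum]
    rw [Finset.sum_comm]
    refine Finset.sum_congr rfl fun p _ => Finset.sum_congr rfl fun q _ => ?_
    rw [star_prod]
    ring
  rw [expand, hS n, hS m]
  have hstar : (lam ^ N • (V * P m * Vᴴ))ᴴ
      = (starRingEnd ℂ lam) ^ N • (V * (P m)ᴴ * Vᴴ) := by
    rw [conjTranspose_smul]
    simp only [Matrix.conjTranspose_mul, Matrix.conjTranspose_conjTranspose,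
      Matrix.mul_assoc, star_pow]
    rfl
  rw [hstar]
  rw [Matrix.smul_mul, Matrix.smul_mul, Matrix.mul_smul, smul_smul,
    Matrix.trace_smul]
  have hlam1 : (starRingEnd ℂ lam) ^ N * lam ^ N = 1 := by
    rw [← mul_pow]
    have : (starRingEnd ℂ lam) * lam = 1 := by
      rw [mul_comm, Complex.mul_conj, Complex.normSq_eq_norm_sq, hlam]
      norm_num
    rw [this, one_pow]
  rw [hlam1, one_smul]
  have htr : ((V * (P m)ᴴ * Vᴴ) * Λ * (V * P n * Vᴴ)).trace
      = ((P m)ᴴ * Λ * P n).trace := by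
    have h1 : (V * (P m)ᴴ * Vᴴ) * Λ * (V * P n * Vᴴ)
        = V * ((P m)ᴴ * (Vᴴ * Λ * V) * P n * Vᴴ) := by
      simp only [Matrix.mul_assoc]
    rw [h1, Matrix.trace_mul_comm]
    have h2 : (P m)ᴴ * (Vᴴ * Λ * V) * P n * Vᴴ * V
        = (P m)ᴴ * (Vᴴ * Λ * V) * P n := by
      rw [Matrix.mul_assoc, hVhV, Matrix.mul_one]
    rw [h2, hΛinv]
  rw [htr]
  rfl
end

section
/- Let V be a D×D complex unitary matrix such that the families {V * A_j * Vᴴ}_{j ∈ Fin d} and {A_j}_{j ∈ Fin d} are Kraus decompositions of the same completely positive map, i.e. ∑_j (V * A_j * Vᴴ) * X * (V * A_j * Vᴴ)ᴴ = ∑_j A_j * X * (A_j)ᴴ for every D×D matrix X. Then there exists a d×d unitary matrix u such that V * A_j * Vᴴ = ∑_n u_{n,j} · A_n for every j. -/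
open Matrix Complex

noncomputable section

local notation "⟪" x ", " y "⟫" => @inner ℂ _ _ x y

lemma kraus_core {d : ℕ} {ι : Type*} [Fintype ι] [DecidableEq ι]
    (a b : Fin d → EuclideanSpace ℂ ι)
    (h : ∀ x : EuclideanSpace ℂ ι,
      ∑ j, ⟪a j, x⟫ • a j = ∑ j, ⟪b j, x⟫ • b j) :
    ∃ u : Matrix (Fin d) (Fin d) ℂ, u ∈ Matrix.unitaryGroup (Fin d) ℂ ∧
      ∀ j i, b j i = ∑ n, u n j * a n i := by
  classical
  let C : EuclideanSpace ℂ ι →ₗ[ℂ] EuclideanSpace ℂ (Fin d) :=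
    { toFun := fun x => WithLp.toLp 2 (fun j => ⟪a j, x⟫ : Fin d → ℂ)
      map_add' := by intro x y; ext j; simp [inner_add_right]
      map_smul' := by intro c x; ext j; simp [inner_smul_right] }
  let Dm : EuclideanSpace ℂ ι →ₗ[ℂ] EuclideanSpace ℂ (Fin d) :=
    { toFun := fun x => WithLp.toLp 2 (fun j => ⟪b j, x⟫ : Fin d → ℂ)
      map_add' := by intro x y; ext j; simp [inner_add_right]
      map_smul' := by intro c x; ext j; simp [inner_smul_right] }
  have hCval : ∀ x j, C x j = ⟪a j, x⟫ := fun _ _ => rfl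
  have hDval : ∀ x j, Dm x j = ⟪b j, x⟫ := fun _ _ => rfl
  have hinner : ∀ x, (⟪C x, C x⟫ : ℂ) = ⟪Dm x, Dm x⟫ := by
    intro x
    have h1 : (⟪C x, C x⟫ : ℂ) = ⟪∑ j, ⟪a j, x⟫ • a j, x⟫ := by
      rw [sum_inner]
      simp only [inner_smul_left]
      rw [PiLp.inner_apply]
      simp [hCval, RCLike.inner_apply, mul_comm]
      refine Finset.sum_congr rfl fun j _ => ?_
      rw [← inner_conj_symm x (a j), Complex.conj_mul']
    have h2 : (⟪Dm x, Dm x⟫ : ℂ) = ⟪∑ j, ⟪b j, x⟫ • b j, x⟫ := by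
      rw [sum_inner]
      simp only [inner_smul_left]
      rw [PiLp.inner_apply]
      simp [hDval, RCLike.inner_apply, mul_comm]
      refine Finset.sum_congr rfl fun j _ => ?_
      rw [← inner_conj_symm x (b j), Complex.conj_mul']
    rw [h1, h2, h x]
  have hnorm : ∀ x, ‖C x‖ = ‖Dm x‖ := by
    intro x
    have := hinner x
    rw [inner_self_eq_norm_sq_to_K, inner_self_eq_norm_sq_to_K] at this
    have h2 : (‖C x‖ : ℝ) ^ 2 = ‖Dm x‖ ^ 2 := by exact_mod_cast this
    exact (sq_eq_sq₀ (norm_nonneg _) (norm_nonneg _)).mp h2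
  -- build the unitary intertwining isometry
  have hker : LinearMap.ker C ≤ LinearMap.ker Dm := by
    intro x hx
    rw [LinearMap.mem_ker] at hx ⊢
    have := hnorm x
    rw [hx, norm_zero] at this
    exact norm_eq_zero.mp this.symm
  let L0 : (LinearMap.range C) →ₗ[ℂ] EuclideanSpace ℂ (Fin d) :=
    ((LinearMap.ker C).liftQ Dm hker).comp
      (LinearMap.quotKerEquivRange C).symm.toLinearMap
  have hL0 : ∀ x : EuclideanSpace ℂ ι,
      L0 ⟨C x, LinearMap.mem_range_self C x⟩ = Dm x := by
    intro x
    simp only [L0, LinearMap.coe_comp, Function.comp_apply, LinearEquiv.coe_toLinearMap]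
    rw [LinearMap.quotKerEquivRange_symm_apply_image]
    exact LinearMap.congr_fun (Submodule.liftQ_mkQ (LinearMap.ker C) Dm hker) x
  let L : (LinearMap.range C) →ₗᵢ[ℂ] EuclideanSpace ℂ (Fin d) :=
    { toLinearMap := L0
      norm_map' := by
        rintro ⟨y, x, rfl⟩
        rw [hL0 x]
        exact (hnorm x).symm }
  let w := L.extend
  have hwC : ∀ x, w (C x) = Dm x := by
    intro x
    have : C x = ((⟨C x, LinearMap.mem_range_self C x⟩ : LinearMap.range C) :
        EuclideanSpace ℂ (Fin d)) := rfl
    rw [this, L.extend_apply]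
    exact hL0 x
  -- the matrix of w
  set u0 : Matrix (Fin d) (Fin d) ℂ :=
    fun i j => w (EuclideanSpace.single j 1) i with hu0def
  have hmul : ∀ (y : EuclideanSpace ℂ (Fin d)) i, w y i = ∑ j, u0 i j * y j := by
    intro y i
    have hy : y = ∑ j, y j • EuclideanSpace.single j (1 : ℂ) := by
      ext k
      rw [WithLp.ofLp_sum, Finset.sum_apply]
      simp [EuclideanSpace.single_apply]
    conv_lhs => rw [hy]
    rw [map_sum, WithLp.ofLp_sum, Finset.sum_apply]
    refine Finset.sum_congr rfl fun j _ => ?_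
    rw [w.map_smul]
    simp [hu0def, mul_comm]
  have hu0 : u0 ∈ Matrix.unitaryGroup (Fin d) ℂ := by
    rw [Matrix.mem_unitaryGroup_iff']
    ext i j
    have hip := w.inner_map_map (EuclideanSpace.single i (1 : ℂ))
      (EuclideanSpace.single j (1 : ℂ))
    rw [PiLp.inner_apply] at hip
    simp only [RCLike.inner_apply] at hip
    have hrhs : (⟪EuclideanSpace.single i (1:ℂ), EuclideanSpace.single j (1:ℂ)⟫ : ℂ)
        = if i = j then 1 else 0 := by
      rw [EuclideanSpace.inner_single_left]
      simp [EuclideanSpace.single_apply, eq_comm]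
    rw [hrhs] at hip
    rw [Matrix.mul_apply, Matrix.one_apply, ← hip]
    simp only [Matrix.star_apply]
    simp [Matrix.star_apply, hu0def, mul_comm, RCLike.star_def]
  -- conclude
  refine ⟨u0ᴴ, ?_, ?_⟩
  · have : (u0ᴴ : Matrix (Fin d) (Fin d) ℂ) = star u0 := rfl
    rw [this]
    exact Unitary.star_mem hu0
  · intro j i
    have hx : w (C (EuclideanSpace.single i 1)) j = Dm (EuclideanSpace.single i 1) j :=
      congrFun (congrArg WithLp.ofLp (hwC (EuclideanSpace.single i 1))) j
    rw [hmul] at hx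
    have hC : ∀ n, C (EuclideanSpace.single i (1:ℂ)) n = (starRingEnd ℂ) (a n i) := by
      intro n
      rw [hCval]
      rw [EuclideanSpace.inner_single_right]
      simp
    have hD : Dm (EuclideanSpace.single i (1:ℂ)) j = (starRingEnd ℂ) (b j i) := by
      rw [hDval, EuclideanSpace.inner_single_right]
      simp
    rw [hD] at hx
    simp only [hC] at hx
    have h3 := congrArg (starRingEnd ℂ) hx
    simp only [map_sum, _root_.map_mul, Complex.conj_conj, RingHomCompTriple.comp_apply,
      RingHom.id_apply] at h3
    rw [← h3]
    refine Finset.sum_congr rfl fun n _ => ?_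
    simp [Matrix.conjTranspose_apply]

/-- Two Kraus decompositions `{V A_j Vᴴ}` and `{A_j}` of the same completely
positive map are related by a unitary matrix `u`: `V A_j Vᴴ = ∑_n u_{n,j} A_n`. -/
theorem kraus_decompositions_unitarily_related (d D : ℕ) (hd : 1 ≤ d) (hD : 1 ≤ D)
    (A : Fin d → Matrix (Fin D) (Fin D) ℂ)
    (V : Matrix (Fin D) (Fin D) ℂ) (hV : V ∈ Matrix.unitaryGroup (Fin D) ℂ)
    (hsame : ∀ X : Matrix (Fin D) (Fin D) ℂ,
      ∑ j : Fin d, (V * A j * Vᴴ) * X * (V * A j * Vᴴ)ᴴ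
        = ∑ j : Fin d, A j * X * (A j)ᴴ) :
    ∃ u : Matrix (Fin d) (Fin d) ℂ, u ∈ Matrix.unitaryGroup (Fin d) ℂ ∧
      ∀ j : Fin d, V * A j * Vᴴ = ∑ n : Fin d, u n j • A n := by
  classical
  set B : Fin d → Matrix (Fin D) (Fin D) ℂ := fun j => V * A j * Vᴴ with hB
  let a : Fin d → EuclideanSpace ℂ (Fin D × Fin D) := fun j => WithLp.toLp 2 (fun pk : Fin D × Fin D => A j pk.1 pk.2)
  let b : Fin d → EuclideanSpace ℂ (Fin D × Fin D) := fun j => WithLp.toLp 2 (fun pk : Fin D × Fin D => B j pk.1 pk.2)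
  have hgen : ∀ (M : Matrix (Fin D) (Fin D) ℂ) (p k q l : Fin D),
      (M * Matrix.single k l (1 : ℂ) * Mᴴ) p q = M p k * (starRingEnd ℂ) (M q l) := by
    intro M p k q l
    simp [Matrix.mul_apply, Matrix.single, Matrix.conjTranspose_apply,
      ite_and, mul_ite, ite_mul, zero_mul, mul_zero, mul_one,
      Finset.sum_ite_eq, Finset.sum_ite_eq', RCLike.star_def]
  have hkey : ∀ (p k q l : Fin D),
      ∑ j, B j p k * (starRingEnd ℂ) (B j q l)
        = ∑ j, A j p k * (starRingEnd ℂ) (A j q l) := by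
    intro p k q l
    have hent := congrFun (congrFun (hsame (Matrix.single k l (1 : ℂ))) p) q
    rw [Matrix.sum_apply, Matrix.sum_apply] at hent
    calc ∑ j, B j p k * (starRingEnd ℂ) (B j q l)
        = ∑ j, (B j * Matrix.single k l (1 : ℂ) * (B j)ᴴ) p q :=
          Finset.sum_congr rfl fun j _ => (hgen (B j) p k q l).symm
      _ = ∑ j, (A j * Matrix.single k l (1 : ℂ) * (A j)ᴴ) p q := hent
      _ = ∑ j, A j p k * (starRingEnd ℂ) (A j q l) :=
          Finset.sum_congr rfl fun j _ => hgen (A j) p k q l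
  have expand : ∀ (c : Fin d → EuclideanSpace ℂ (Fin D × Fin D))
      (x : EuclideanSpace ℂ (Fin D × Fin D)) (pk : Fin D × Fin D),
      (∑ j, (⟪c j, x⟫ : ℂ) • c j) pk
        = ∑ ql : Fin D × Fin D, x ql * ∑ j, c j pk * (starRingEnd ℂ) (c j ql) := by
    intro c x pk
    rw [WithLp.ofLp_sum, Finset.sum_apply]
    simp only [PiLp.smul_apply, smul_eq_mul, PiLp.inner_apply, RCLike.inner_apply']
    calc ∑ j, (∑ ql, (starRingEnd ℂ) (c j ql) * x ql) * c j pk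
        = ∑ j, ∑ ql, (starRingEnd ℂ) (c j ql) * x ql * c j pk := by
          simp [Finset.sum_mul]
      _ = ∑ ql, ∑ j, (starRingEnd ℂ) (c j ql) * x ql * c j pk := Finset.sum_comm
      _ = ∑ ql, x ql * ∑ j, c j pk * (starRingEnd ℂ) (c j ql) := by
          refine Finset.sum_congr rfl fun ql _ => ?_
          rw [Finset.mul_sum]
          exact Finset.sum_congr rfl fun j _ => by ring
  have hcore : ∀ x : EuclideanSpace ℂ (Fin D × Fin D),
      ∑ j, ⟪a j, x⟫ • a j = ∑ j, ⟪b j, x⟫ • b j := by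
    intro x
    ext pk
    rw [expand a x pk, expand b x pk]
    refine Finset.sum_congr rfl fun ql _ => ?_
    congr 1
    exact (hkey pk.1 pk.2 ql.1 ql.2).symm
  obtain ⟨u, hu, hbu⟩ := kraus_core a b hcore
  refine ⟨u, hu, fun j => ?_⟩
  ext p k
  have h1 := hbu j (p, k)
  simp only [Matrix.sum_apply, Matrix.smul_apply, smul_eq_mul]
  exact h1

end
end
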